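/- Kantorovich inequality: Let T be an n×n real symmetric positive definite matrix (n ≥ 1) with smallest eigenvalue ρₙ and largest eigenvalue ρ₁. Then for every nonzero vector v ∈ ℝⁿ, (v'v)² / ((v'Tv)·(v'T⁻¹v)) ≥ 4ρ₁ρₙ/(ρ₁+ρₙ)². -/

import Mathlib

open Matrix

/-- Kantorovich inequality: for a symmetric positive definite `T` with largest eigenvalue `ρ1`
and smallest eigenvalue `ρn`, for every nonzero `v`,
`(v'v)² / ((v'Tv)·(v'T⁻¹v)) ≥ 4ρ1ρn/(ρ1+ρn)²`. -/
theorem kantorovich_inequality (n : ℕ) (hn : 1 ≤ n)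
    (T : Matrix (Fin n) (Fin n) ℝ) (hT : T.PosDef)
    (ρ1 ρn : ℝ)
    (hρ1 : IsGreatest (Set.range hT.1.eigenvalues) ρ1)
    (hρn : IsLeast (Set.range hT.1.eigenvalues) ρn)
    (v : Fin n → ℝ) (hv : v ≠ 0) :
    (v ⬝ᵥ v) ^ 2 / ((v ⬝ᵥ T *ᵥ v) * (v ⬝ᵥ T⁻¹ *ᵥ v)) ≥ 4 * ρ1 * ρn / (ρ1 + ρn) ^ 2 := by
  classical
  set μ := hT.1.eigenvalues with hμ
  set U : Matrix (Fin n) (Fin n) ℝ := (hT.1.eigenvectorUnitary : Matrix (Fin n) (Fin n) ℝ) with hUdef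
  have hstar : (star (hT.1.eigenvectorUnitary : Matrix (Fin n) (Fin n) ℝ)) = Uᵀ := by
    ext i j
    simp [Matrix.star_apply, hUdef]
  have hspec : T = U * diagonal μ * Uᵀ := by
    have h := hT.1.spectral_theorem
    rw [Unitary.conjStarAlgAut_apply, hstar] at h
    simpa using h
  have hUtU : Uᵀ * U = 1 := by
    have := Unitary.coe_star_mul_self hT.1.eigenvectorUnitary
    rwa [hstar] at this
  have hUUt : U * Uᵀ = 1 := mul_eq_one_comm.mp hUtU
  set c : Fin n → ℝ := Uᵀ *ᵥ v with hc
  have key : ∀ (M : Matrix (Fin n) (Fin n) ℝ), v ⬝ᵥ (U * M * Uᵀ) *ᵥ v = c ⬝ᵥ M *ᵥ c := by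
    intro M
    rw [← mulVec_mulVec, ← mulVec_mulVec, dotProduct_mulVec, ← mulVec_transpose, hc]
  have hdiag : ∀ (d : Fin n → ℝ), c ⬝ᵥ (diagonal d) *ᵥ c = ∑ i, d i * c i ^ 2 := by
    intro d
    simp only [dotProduct, mulVec_diagonal]
    exact Finset.sum_congr rfl fun i _ => by ring
  have hμpos : ∀ i, 0 < μ i := fun i => hT.eigenvalues_pos i
  have hle1 : ∀ i, μ i ≤ ρ1 := fun i => hρ1.2 ⟨i, rfl⟩
  have hlen : ∀ i, ρn ≤ μ i := fun i => hρn.2 ⟨i, rfl⟩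
  have hρn_pos : 0 < ρn := by
    obtain ⟨i, hi⟩ := hρn.1
    exact hi ▸ hμpos i
  have hρ1_pos : 0 < ρ1 := by
    obtain ⟨i, hi⟩ := hρ1.1
    exact hi ▸ hμpos i
  -- inverse
  have hTinv : T⁻¹ = U * diagonal (fun i => (μ i)⁻¹) * Uᵀ := by
    apply inv_eq_right_inv
    rw [hspec]
    have : diagonal μ * (diagonal fun i => (μ i)⁻¹) = 1 := by
      rw [diagonal_mul_diagonal]
      have heq : (fun i => μ i * (μ i)⁻¹) = fun _ : Fin n => (1:ℝ) := by
        funext i; exact mul_inv_cancel₀ (hμpos i).ne'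
      rw [heq, diagonal_one]
    calc U * diagonal μ * Uᵀ * (U * (diagonal fun i => (μ i)⁻¹) * Uᵀ)
        = U * diagonal μ * (Uᵀ * U) * (diagonal fun i => (μ i)⁻¹) * Uᵀ := by
          noncomm_ring
      _ = U * (diagonal μ * (diagonal fun i => (μ i)⁻¹)) * Uᵀ := by
          rw [hUtU]; noncomm_ring
      _ = 1 := by rw [this, mul_one, hUUt]
  have hvv : v ⬝ᵥ v = ∑ i, c i ^ 2 := by
    have h1 : v ⬝ᵥ (U * 1 * Uᵀ) *ᵥ v = c ⬝ᵥ (1 : Matrix (Fin n) (Fin n) ℝ) *ᵥ c := key 1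
    rw [mul_one, hUUt, one_mulVec, one_mulVec] at h1
    rw [h1, dotProduct]
    exact Finset.sum_congr rfl fun i _ => by ring
  have hTv : v ⬝ᵥ T *ᵥ v = ∑ i, μ i * c i ^ 2 := by
    rw [hspec, key, hdiag]
  have hTiv : v ⬝ᵥ T⁻¹ *ᵥ v = ∑ i, (μ i)⁻¹ * c i ^ 2 := by
    rw [hTinv, key, hdiag]
  have hA : 0 < v ⬝ᵥ T *ᵥ v := by
    have := hT.re_dotProduct_pos hv
    simpa using this
  have hB : 0 < v ⬝ᵥ T⁻¹ *ᵥ v := by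
    have := (Matrix.posDef_inv_iff.mpr hT).re_dotProduct_pos hv
    simpa using this
  -- key sum inequality
  have hsum : (v ⬝ᵥ T *ᵥ v) + ρ1 * ρn * (v ⬝ᵥ T⁻¹ *ᵥ v) ≤ (ρ1 + ρn) * (v ⬝ᵥ v) := by
    rw [hTv, hTiv, hvv, Finset.mul_sum, Finset.mul_sum, ← Finset.sum_add_distrib]
    apply Finset.sum_le_sum
    intro i _
    have h1 := hμpos i
    have h2 := hle1 i
    have h3 := hlen i
    have hcsq : (0:ℝ) ≤ c i ^ 2 := sq_nonneg _
    have hkey : μ i + ρ1 * ρn * (μ i)⁻¹ ≤ ρ1 + ρn := by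
      nlinarith [inv_mul_cancel₀ h1.ne', mul_nonneg (sub_nonneg.2 h2) (sub_nonneg.2 h3),
        mul_pos hρ1_pos hρn_pos, inv_pos.mpr h1]
    nlinarith [mul_le_mul_of_nonneg_right hkey hcsq]
  set A := v ⬝ᵥ T *ᵥ v
  set B := v ⬝ᵥ T⁻¹ *ᵥ v
  set S := v ⬝ᵥ v
  have hABpos : 0 < A * B := mul_pos hA hB
  have hρρ : 0 < ρ1 * ρn := mul_pos hρ1_pos hρn_pos
  have hpos : (0:ℝ) ≤ A + ρ1 * ρn * B := by positivity
  have hsq : (A + ρ1 * ρn * B) * (A + ρ1 * ρn * B) ≤ ((ρ1 + ρn) * S) * ((ρ1 + ρn) * S) :=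
    mul_le_mul hsum hsum hpos (le_trans hpos hsum)
  rw [ge_iff_le, div_le_div_iff₀ (by positivity) hABpos]
  nlinarith [hsq, sq_nonneg (A - ρ1 * ρn * B), hρρ]
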